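/- Let A, C be positive semidefinite matrices and B a rectangular matrix such that (A B; B† C) ≥ 0. If Tr(A) ≤ a and Tr(C) ≤ c, then Tr|B| ≤ √(ac), where Tr|B| is the trace norm of B. In particular, taking A = Σ-weighted residuals and B the Gram block Ψ_i†Ψ_j of vectors generating ρ̃_i and ρ̃_j, one obtains Σ_k(q_{ik} − γ_{ik}) · Σ_l(q_{jl} − γ_{jl}) ≥ F²(ρ̃_i, ρ̃_j) whenever X̃ − Γ̃ ≥ 0 with Γ̃ block diagonal. -/

import Mathlib

open Matrix BigOperators ComplexOrder
open scoped Classical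

/-- The positive semidefinite square root of a matrix (0 if the matrix is not PSD). -/
noncomputable def msqrt {n : ℕ} (A : Matrix (Fin n) (Fin n) ℂ) : Matrix (Fin n) (Fin n) ℂ :=
  if h : A.PosSemidef then
    (h.1.eigenvectorUnitary : Matrix (Fin n) (Fin n) ℂ) *
      diagonal ((↑) ∘ (√·) ∘ h.1.eigenvalues) *
      (star h.1.eigenvectorUnitary : Matrix (Fin n) (Fin n) ℂ) else 0

namespace Matrix.PosSemidef
noncomputable abbrev sqrt {n : Type*} [Fintype n] [DecidableEq n] {A : Matrix n n ℂ}
    (h : A.PosSemidef) : Matrix n n ℂ :=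
  (h.1.eigenvectorUnitary : Matrix n n ℂ) * diagonal ((↑) ∘ (√·) ∘ h.1.eigenvalues) *
    (star h.1.eigenvectorUnitary : Matrix n n ℂ)

lemma posSemidef_sqrt {n : Type*} [Fintype n] [DecidableEq n] {A : Matrix n n ℂ}
    (h : A.PosSemidef) : h.sqrt.PosSemidef := by
  unfold sqrt
  rw [star_eq_conjTranspose]
  apply PosSemidef.mul_mul_conjTranspose_same
  rw [posSemidef_diagonal_iff]
  intro i
  simp [Complex.zero_le_real, Real.sqrt_nonneg]

lemma sqrt_mul_self {n : Type*} [Fintype n] [DecidableEq n] {A : Matrix n n ℂ}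
    (h : A.PosSemidef) : h.sqrt * h.sqrt = A := by
  unfold sqrt
  have hU : star (h.1.eigenvectorUnitary : Matrix n n ℂ) * h.1.eigenvectorUnitary = 1 := by
    exact Unitary.coe_star_mul_self _
  conv_rhs => rw [h.1.spectral_theorem, Unitary.conjStarAlgAut_apply]
  simp only [Matrix.mul_assoc]
  rw [← Matrix.mul_assoc (star _) (h.1.eigenvectorUnitary : Matrix n n ℂ), hU,
    Matrix.one_mul, ← Matrix.mul_assoc (diagonal _) (diagonal _), diagonal_mul_diagonal]
  congr 3
  funext i
  simp only [Function.comp_apply]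
  rw [← Complex.ofReal_mul, Real.mul_self_sqrt (h.eigenvalues_nonneg i)]
  rfl
end Matrix.PosSemidef

/-- Fidelity of two positive semidefinite matrices: `F(ρ,σ) = Tr √(√σ ρ √σ)`. -/
noncomputable def fidelity {n : ℕ} (ρ σ : Matrix (Fin n) (Fin n) ℂ) : ℝ :=
  (msqrt (msqrt σ * ρ * msqrt σ)).trace.re

lemma psd_trace_re_nonneg {n : Type*} [Fintype n] {M : Matrix n n ℂ} (hM : M.PosSemidef) :
    0 ≤ M.trace.re := by
  classical
  have h : ∀ i, 0 ≤ (M i i).re := by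
    intro i
    have := hM.re_dotProduct_nonneg (Pi.single i 1)
    simpa [dotProduct, Matrix.mulVec, Pi.single_apply] using this
  have : M.trace.re = ∑ i, (M i i).re := by
    simp [Matrix.trace, Matrix.diag, Complex.re_sum]
  rw [this]
  exact Finset.sum_nonneg fun i _ => h i

-- trace of sqrt as sum of sqrt eigenvalues
lemma trace_sqrt_eq {n : Type*} [Fintype n] [DecidableEq n] {M : Matrix n n ℂ}
    (hM : M.PosSemidef) :
    hM.sqrt.trace = ∑ k, (Real.sqrt (hM.1.eigenvalues k) : ℂ) := by
  rw [Matrix.PosSemidef.sqrt, Matrix.trace_mul_cycle]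
  rw [Unitary.coe_star_mul_self, Matrix.one_mul, Matrix.trace_diagonal]
  rfl

lemma sqrt_mulVec_eigen {n : Type*} [Fintype n] [DecidableEq n] {M : Matrix n n ℂ}
    (hM : M.PosSemidef) {x : n → ℂ} {μ : ℝ} (hx : M *ᵥ x = ((μ : ℂ)) • x) :
    hM.sqrt *ᵥ x = ((Real.sqrt μ : ℂ)) • x := by
  set U : Matrix n n ℂ := (hM.1.eigenvectorUnitary : Matrix n n ℂ) with hU
  have hUU : star U * U = 1 := Unitary.coe_star_mul_self _
  have hUU' : U * star U = 1 := Unitary.coe_mul_star_self _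
  set c : n → ℂ := star U *ᵥ x with hc
  have hxc : U *ᵥ c = x := by
    rw [hc, Matrix.mulVec_mulVec, hUU', Matrix.one_mulVec]
  have hspec : M = U * Matrix.diagonal (RCLike.ofReal ∘ hM.1.eigenvalues) * star U :=
    by conv_lhs => rw [hM.1.spectral_theorem, Unitary.conjStarAlgAut_apply]
  have hkey : star U * M = Matrix.diagonal (RCLike.ofReal ∘ hM.1.eigenvalues) * star U := by
    have h2 : star U * M
        = star U * (U * Matrix.diagonal (RCLike.ofReal ∘ hM.1.eigenvalues) * star U) :=
      congrArg (fun Z => star U * Z) hspec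
    rw [h2, ← Matrix.mul_assoc, ← Matrix.mul_assoc, hUU, Matrix.one_mul]
  have hD0 : Matrix.diagonal (RCLike.ofReal ∘ hM.1.eigenvalues : n → ℂ) *ᵥ c = (μ : ℂ) • c := by
    rw [hc, Matrix.mulVec_mulVec, ← hkey, ← Matrix.mulVec_mulVec, hx, Matrix.mulVec_smul]
  have hentry' : ∀ k, (Real.sqrt (hM.1.eigenvalues k) : ℂ) * c k = (Real.sqrt μ : ℂ) * c k := by
    intro k
    have h1 : (hM.1.eigenvalues k : ℂ) * c k = (μ:ℂ) * c k := by
      have := congrFun hD0 k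
      simpa [Matrix.mulVec_diagonal] using this
    rcases eq_or_ne (c k) 0 with h0 | h0
    · simp [h0]
    · have : (hM.1.eigenvalues k : ℂ) = (μ:ℂ) := mul_right_cancel₀ h0 h1
      have : hM.1.eigenvalues k = μ := by exact_mod_cast this
      rw [this]
  have hD : Matrix.diagonal (Complex.ofReal ∘ (fun x => √x) ∘ hM.1.eigenvalues : n → ℂ) *ᵥ c
      = (Real.sqrt μ : ℂ) • c := by
    funext k
    simpa [Matrix.mulVec_diagonal] using hentry' k
  rw [Matrix.PosSemidef.sqrt, ← Matrix.mulVec_mulVec, ← Matrix.mulVec_mulVec, ← hc, hD,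
    Matrix.mulVec_smul, hxc]

lemma sum_quadform_le_trace {p r : Type*} [Fintype p] [Fintype r] [DecidableEq p]
    {T : Matrix r r ℂ} (hT : T.PosSemidef) (u : p → r → ℂ)
    (horth : ∀ t s, star (u t) ⬝ᵥ u s = if t = s then star (u t) ⬝ᵥ u t else 0)
    (hnorm : ∀ t, star (u t) ⬝ᵥ u t = 0 ∨ star (u t) ⬝ᵥ u t = 1) :
    ∑ t, (star (u t) ⬝ᵥ (T *ᵥ u t)).re ≤ T.trace.re := by
  set W : Matrix r p ℂ := Matrix.of (fun x t => u t x) with hW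
  have hWHW : Wᴴ * W = Matrix.diagonal (fun t => star (u t) ⬝ᵥ u t) := by
    ext t s
    rw [Matrix.diagonal_apply, ← horth t s]
    simp [hW, Matrix.mul_apply, Matrix.conjTranspose_apply, dotProduct]
  have hWd : W * Matrix.diagonal (fun t => star (u t) ⬝ᵥ u t) = W := by
    ext x t
    rcases hnorm t with h | h
    · have hu : u t = 0 := dotProduct_star_self_eq_zero.1 h
      simp [Matrix.mul_diagonal, h, hW, hu]
    · simp [Matrix.mul_diagonal, h]
  set P : Matrix r r ℂ := W * Wᴴ with hP
  have hPP : P * P = P := by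
    rw [hP, Matrix.mul_assoc, ← Matrix.mul_assoc Wᴴ W Wᴴ, hWHW, ← Matrix.mul_assoc, hWd]
  have hPH : Pᴴ = P := by simp [hP]
  have hpsd : ((1 - P) * T * (1 - P)ᴴ).PosSemidef := hT.mul_mul_conjTranspose_same (1 - P)
  have h0 : 0 ≤ ((1 - P) * T * (1 - P)ᴴ).trace.re := psd_trace_re_nonneg hpsd
  have e1 : (P * T).trace = (Wᴴ * T * W).trace := by
    rw [hP, Matrix.mul_assoc, Matrix.trace_mul_comm, Matrix.mul_assoc]
  have e3 : (P * T * P).trace = (Wᴴ * T * W).trace := by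
    rw [Matrix.trace_mul_comm, ← Matrix.mul_assoc, hPP]
    exact e1
  have hexp : ((1 - P) * T * (1 - P)ᴴ).trace = T.trace - (Wᴴ * T * W).trace := by
    have h1 : (1 - P)ᴴ = 1 - P := by simp [Matrix.conjTranspose_sub, hPH]
    rw [h1]
    have h2 : (1 - P) * T * (1 - P) = T - P * T - T * P + P * T * P := by noncomm_ring
    rw [h2, Matrix.trace_add, Matrix.trace_sub, Matrix.trace_sub, e1, e3,
      Matrix.trace_mul_comm T P, e1]
    ring
  have hsum : ∑ t, (star (u t) ⬝ᵥ (T *ᵥ u t)).re = (Wᴴ * T * W).trace.re := by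
    rw [Matrix.trace, Complex.re_sum]
    congr 1
    funext t
    congr 1
    simp only [hW, Matrix.diag_apply, Matrix.mul_apply, Matrix.conjTranspose_apply, dotProduct,
      Matrix.mulVec, Matrix.of_apply, Pi.star_apply, Finset.sum_mul, Finset.mul_sum, mul_assoc]
    rw [Finset.sum_comm]
  have := congrArg Complex.re hexp
  rw [Complex.sub_re] at this
  rw [hsum]
  linarith

lemma quadform_fromBlocks {p r : Type*} [Fintype p] [Fintype r]
    (A : Matrix p p ℂ) (B : Matrix p r ℂ) (B' : Matrix r p ℂ) (C : Matrix r r ℂ)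
    (u : p → ℂ) (v : r → ℂ) :
    star (Sum.elim u v) ⬝ᵥ ((Matrix.fromBlocks A B B' C) *ᵥ Sum.elim u v)
      = star u ⬝ᵥ (A *ᵥ u) + star u ⬝ᵥ (B *ᵥ v) + star v ⬝ᵥ (B' *ᵥ u) + star v ⬝ᵥ (C *ᵥ v) := by
  simp [Matrix.fromBlocks_mulVec, dotProduct, Fintype.sum_sum_type, Pi.add_apply,
    mul_add, Finset.sum_add_distrib]
  ring

-- conj symmetry: star v ⬝ᵥ Bᴴ *ᵥ u = conj (star u ⬝ᵥ B *ᵥ v)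
lemma dot_conj_symm {p r : Type*} [Fintype p] [Fintype r] (B : Matrix p r ℂ)
    (u : p → ℂ) (v : r → ℂ) :
    star v ⬝ᵥ (Bᴴ *ᵥ u) = starRingEnd ℂ (star u ⬝ᵥ (B *ᵥ v)) := by
  simp [dotProduct, Matrix.mulVec, Matrix.conjTranspose_apply, Finset.mul_sum, map_sum]
  rw [Finset.sum_comm]
  congr 1; funext x; congr 1; funext y; ring

lemma block_cs {p r : Type*} [Fintype p] [Fintype r]
    {A : Matrix p p ℂ} {B : Matrix p r ℂ} {C : Matrix r r ℂ}
    (h : (Matrix.fromBlocks A B Bᴴ C).PosSemidef) (u : p → ℂ) (v : r → ℂ) (s : ℝ)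
    (hs : star u ⬝ᵥ (B *ᵥ v) = (s : ℂ)) (hsnn : 0 ≤ s) :
    s ≤ Real.sqrt (star u ⬝ᵥ (A *ᵥ u)).re * Real.sqrt (star v ⬝ᵥ (C *ᵥ v)).re := by
  set α := (star u ⬝ᵥ (A *ᵥ u)).re with hαd
  set β := (star v ⬝ᵥ (C *ᵥ v)).re with hβd
  have hα : 0 ≤ α := by
    have h3 := h.re_dotProduct_nonneg (Sum.elim u 0)
    rw [quadform_fromBlocks] at h3
    simpa [hαd] using h3
  have hβ : 0 ≤ β := by
    have h3 := h.re_dotProduct_nonneg (Sum.elim 0 v)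
    rw [quadform_fromBlocks] at h3
    simpa [hβd] using h3
  have hquad : ∀ t : ℝ, 0 ≤ α * (t * t) + (-(2 * s)) * t + β := by
    intro t
    have c1 : star ((-(t:ℂ)) • u) ⬝ᵥ (A *ᵥ ((-(t:ℂ)) • u))
        = ((t:ℂ) * t) * (star u ⬝ᵥ (A *ᵥ u)) := by
      simp only [star_smul, smul_dotProduct, Matrix.mulVec_smul, dotProduct_smul, smul_eq_mul,
        star_neg, RCLike.star_def, Complex.conj_ofReal]
      ring
    have c2 : star ((-(t:ℂ)) • u) ⬝ᵥ (B *ᵥ v) = -((t:ℂ) * s) := by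
      simp only [star_smul, smul_dotProduct, smul_eq_mul, star_neg, RCLike.star_def,
        Complex.conj_ofReal, hs]
      ring
    have c3 : star v ⬝ᵥ (Bᴴ *ᵥ ((-(t:ℂ)) • u)) = -((t:ℂ) * s) := by
      rw [Matrix.mulVec_smul, dotProduct_smul, dot_conj_symm, hs]
      simp only [smul_eq_mul, Complex.conj_ofReal]
      ring
    have h3 := h.re_dotProduct_nonneg (Sum.elim ((-(t:ℂ)) • u) v)
    rw [quadform_fromBlocks, c1, c2, c3] at h3
    have e : ((t:ℂ) * t) * (star u ⬝ᵥ (A *ᵥ u)) + -((t:ℂ) * s) + -((t:ℂ) * s)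
          + star v ⬝ᵥ (C *ᵥ v)
        = ((t * t : ℝ) : ℂ) * (star u ⬝ᵥ (A *ᵥ u)) + ((-(2 * s) * t : ℝ) : ℂ)
          + star v ⬝ᵥ (C *ᵥ v) := by
      push_cast; ring
    rw [e] at h3
    simpa [Complex.add_re, Complex.re_ofReal_mul, ← hαd, ← hβd, mul_comm] using h3
  have hd := discrim_le_zero hquad
  rw [discrim] at hd
  have hsq : s ^ 2 ≤ α * β := by nlinarith
  calc s ≤ Real.sqrt (α * β) := Real.le_sqrt_of_sq_le hsq
    _ = Real.sqrt α * Real.sqrt β := Real.sqrt_mul hα β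

lemma eigen_orth {n : Type*} [Fintype n] [DecidableEq n] {M : Matrix n n ℂ} (hM : M.IsHermitian)
    (k l : n) : star (⇑(hM.eigenvectorBasis k) : n → ℂ) ⬝ᵥ (⇑(hM.eigenvectorBasis l) : n → ℂ)
      = if k = l then 1 else 0 := by
  have h1 := hM.eigenvectorBasis.orthonormal
  rw [orthonormal_iff_ite] at h1
  have h2 := h1 k l
  rw [EuclideanSpace.inner_eq_star_dotProduct, dotProduct_comm] at h2
  simpa using h2

lemma mulVec_eigen' {n : Type*} [Fintype n] [DecidableEq n] {M : Matrix n n ℂ}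
    (hM : M.IsHermitian) (k : n) :
    M *ᵥ ⇑(hM.eigenvectorBasis k) = ((hM.eigenvalues k : ℂ)) • ⇑(hM.eigenvectorBasis k) := by
  rw [hM.mulVec_eigenvectorBasis]
  funext x
  simp [Complex.real_smul]

lemma part1 {p r : ℕ} (A : Matrix (Fin p) (Fin p) ℂ) (B : Matrix (Fin p) (Fin r) ℂ)
    (C : Matrix (Fin r) (Fin r) ℂ) (h : (Matrix.fromBlocks A B Bᴴ C).PosSemidef)
    (a c : ℝ) (ha : A.trace.re ≤ a) (hc : C.trace.re ≤ c) :
    (msqrt (Bᴴ * B)).trace.re ≤ Real.sqrt (a * c) := by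
  have hM : (Bᴴ * B).PosSemidef := Matrix.posSemidef_conjTranspose_mul_self B
  rw [msqrt, dif_pos hM, trace_sqrt_eq hM]
  set lam : Fin r → ℝ := hM.1.eigenvalues with hlam
  have hlamnn : ∀ k, 0 ≤ lam k := fun k => hM.eigenvalues_nonneg k
  set v : Fin r → Fin r → ℂ := fun k => ⇑(hM.1.eigenvectorBasis k) with hv
  have hvorth : ∀ k l, star (v k) ⬝ᵥ v l = if k = l then 1 else 0 := eigen_orth hM.1
  have hMv : ∀ k, (Bᴴ * B) *ᵥ v k = ((lam k : ℂ)) • v k := mulVec_eigen' hM.1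
  have hBv : ∀ k l, star (B *ᵥ v k) ⬝ᵥ (B *ᵥ v l)
      = ((lam l : ℂ)) * (if k = l then 1 else 0) := by
    intro k l
    rw [Matrix.star_mulVec, ← dotProduct_mulVec, Matrix.mulVec_mulVec, hMv l,
      dotProduct_smul, hvorth k l, smul_eq_mul]
  set u : Fin r → Fin p → ℂ :=
    fun k => if lam k = 0 then 0 else ((Real.sqrt (lam k))⁻¹ : ℂ) • (B *ᵥ v k) with hu
  have huB : ∀ k, star (u k) ⬝ᵥ (B *ᵥ v k) = ((Real.sqrt (lam k) : ℂ)) := by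
    intro k
    rcases eq_or_ne (lam k) 0 with h0 | h0
    · simp [hu, h0]
    · simp only [hu, if_neg h0, star_smul, smul_dotProduct, RCLike.star_def, smul_eq_mul]
      rw [hBv k k, if_pos rfl]
      rw [← Complex.ofReal_inv, Complex.conj_ofReal, mul_one, ← Complex.ofReal_mul]
      congr 1
      have hpos : 0 < lam k := lt_of_le_of_ne (hlamnn k) (Ne.symm h0)
      have hsne : Real.sqrt (lam k) ≠ 0 := by positivity
      field_simp
      exact (Real.sq_sqrt hpos.le).symm
  have huu : ∀ k l, star (u k) ⬝ᵥ u l = if k = l then star (u k) ⬝ᵥ u k else 0 := by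
    intro k l
    rcases eq_or_ne k l with rfl | hkl
    · simp
    · rw [if_neg hkl]
      rcases eq_or_ne (lam k) 0 with h0 | h0
      · simp [hu, h0]
      rcases eq_or_ne (lam l) 0 with h1 | h1
      · simp [hu, h0, h1]
      simp only [hu, if_neg h0, if_neg h1, star_smul, smul_dotProduct, dotProduct_smul,
        smul_eq_mul, RCLike.star_def]
      rw [hBv k l, if_neg hkl]
      ring
  have hnorm : ∀ k, star (u k) ⬝ᵥ u k = 0 ∨ star (u k) ⬝ᵥ u k = 1 := by
    intro k
    rcases eq_or_ne (lam k) 0 with h0 | h0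
    · left; simp [hu, h0]
    · right
      simp only [hu, if_neg h0, star_smul, smul_dotProduct, dotProduct_smul,
        smul_eq_mul, RCLike.star_def]
      rw [hBv k k, if_pos rfl, ← Complex.ofReal_inv, Complex.conj_ofReal, mul_one]
      rw [← Complex.ofReal_mul, ← Complex.ofReal_mul, ← Complex.ofReal_one]
      congr 1
      have hpos : 0 < lam k := lt_of_le_of_ne (hlamnn k) (Ne.symm h0)
      have hsne : Real.sqrt (lam k) ≠ 0 := by positivity
      field_simp
      exact (Real.sq_sqrt hpos.le).symm
  have hA : A.PosSemidef := by
    have h2 := h.submatrix (Sum.inl : Fin p → Fin p ⊕ Fin r)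
    have h3 : (Matrix.fromBlocks A B Bᴴ C).submatrix (Sum.inl : Fin p → Fin p ⊕ Fin r) Sum.inl
        = A := by ext k l; rfl
    rwa [h3] at h2
  have hC : C.PosSemidef := by
    have h2 := h.submatrix (Sum.inr : Fin r → Fin p ⊕ Fin r)
    have h3 : (Matrix.fromBlocks A B Bᴴ C).submatrix (Sum.inr : Fin r → Fin p ⊕ Fin r) Sum.inr
        = C := by ext k l; rfl
    rwa [h3] at h2
  set al : Fin r → ℝ := fun k => (star (u k) ⬝ᵥ (A *ᵥ u k)).re with hal
  set be : Fin r → ℝ := fun k => (star (v k) ⬝ᵥ (C *ᵥ v k)).re with hbe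
  have halnn : ∀ k, 0 ≤ al k := fun k => hA.re_dotProduct_nonneg (u k)
  have hbenn : ∀ k, 0 ≤ be k := fun k => hC.re_dotProduct_nonneg (v k)
  have hbound : ∀ k, Real.sqrt (lam k) ≤ Real.sqrt (al k) * Real.sqrt (be k) := by
    intro k
    exact block_cs h (u k) (v k) (Real.sqrt (lam k)) (huB k) (Real.sqrt_nonneg _)
  have hsumal : ∑ k, al k ≤ a :=
    le_trans (sum_quadform_le_trace hA u huu hnorm) ha
  have hsumbe : ∑ k, be k ≤ c := by
    refine le_trans (sum_quadform_le_trace hC v ?_ ?_) hc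
    · intro k l; rw [hvorth k l, hvorth k k]; simp
    · intro k; right; exact hvorth k k ▸ by simp
  have hsal : 0 ≤ ∑ k, al k := Finset.sum_nonneg fun k _ => halnn k
  have hsbe : 0 ≤ ∑ k, be k := Finset.sum_nonneg fun k _ => hbenn k
  have t1 : ∑ k, Real.sqrt (lam k) ≤ ∑ k, Real.sqrt (al k) * Real.sqrt (be k) :=
    Finset.sum_le_sum fun k _ => hbound k
  have t2 : (∑ k, Real.sqrt (al k) * Real.sqrt (be k)) ^ 2 ≤ (∑ k, al k) * (∑ k, be k) := by
    have h2 := Finset.sum_mul_sq_le_sq_mul_sq Finset.univ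
      (fun k => Real.sqrt (al k)) (fun k => Real.sqrt (be k))
    rwa [Finset.sum_congr rfl (fun k _ => Real.sq_sqrt (halnn k)),
      Finset.sum_congr rfl (fun k _ => Real.sq_sqrt (hbenn k))] at h2
  have t3 : (∑ k, al k) * (∑ k, be k) ≤ a * c :=
    mul_le_mul hsumal hsumbe hsbe (le_trans hsal hsumal)
  have t0 : 0 ≤ ∑ k, Real.sqrt (lam k) := Finset.sum_nonneg fun k _ => Real.sqrt_nonneg _
  have tfin : (∑ k, Real.sqrt (lam k)) ^ 2 ≤ a * c := by
    calc (∑ k, Real.sqrt (lam k)) ^ 2 ≤ (∑ k, Real.sqrt (al k) * Real.sqrt (be k)) ^ 2 :=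
          pow_le_pow_left₀ t0 t1 2
      _ ≤ (∑ k, al k) * (∑ k, be k) := t2
      _ ≤ a * c := t3
  have : ((∑ k, ((Real.sqrt (lam k) : ℂ))).re) = ∑ k, Real.sqrt (lam k) := by
    push_cast
    simp
  rw [this]
  exact Real.le_sqrt_of_sq_le tfin

lemma traceNorm_le {p r : ℕ} (Z : Matrix (Fin p) (Fin r) ℂ) :
    (msqrt (Z * Zᴴ)).trace.re ≤ (msqrt (Zᴴ * Z)).trace.re := by
  have h1 : (Z * Zᴴ).PosSemidef := Matrix.posSemidef_self_mul_conjTranspose Z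
  have h2 : (Zᴴ * Z).PosSemidef := Matrix.posSemidef_conjTranspose_mul_self Z
  rw [msqrt, dif_pos h1, msqrt, dif_pos h2, trace_sqrt_eq h1]
  set mu : Fin p → ℝ := h1.1.eigenvalues with hmu
  have hmunn : ∀ t, 0 ≤ mu t := fun t => h1.eigenvalues_nonneg t
  set w : Fin p → Fin p → ℂ := fun t => ⇑(h1.1.eigenvectorBasis t) with hw
  have hworth : ∀ t s, star (w t) ⬝ᵥ w s = if t = s then 1 else 0 := eigen_orth h1.1
  have hMw : ∀ t, (Z * Zᴴ) *ᵥ w t = ((mu t : ℂ)) • w t := mulVec_eigen' h1.1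
  have hZw : ∀ t s, star (Zᴴ *ᵥ w t) ⬝ᵥ (Zᴴ *ᵥ w s)
      = ((mu s : ℂ)) * (if t = s then 1 else 0) := by
    intro t s
    rw [Matrix.star_mulVec, ← dotProduct_mulVec, Matrix.mulVec_mulVec,
      Matrix.conjTranspose_conjTranspose, hMw s, dotProduct_smul, hworth t s, smul_eq_mul]
  set u : Fin p → Fin r → ℂ :=
    fun t => if mu t = 0 then 0 else ((Real.sqrt (mu t))⁻¹ : ℂ) • (Zᴴ *ᵥ w t) with hu
  have huu : ∀ t s, star (u t) ⬝ᵥ u s = if t = s then star (u t) ⬝ᵥ u t else 0 := by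
    intro t s
    rcases eq_or_ne t s with rfl | hts
    · simp
    · rw [if_neg hts]
      rcases eq_or_ne (mu t) 0 with h0 | h0
      · simp [hu, h0]
      rcases eq_or_ne (mu s) 0 with h1' | h1'
      · simp [hu, h0, h1']
      simp only [hu, if_neg h0, if_neg h1', star_smul, smul_dotProduct, dotProduct_smul,
        smul_eq_mul, RCLike.star_def]
      rw [hZw t s, if_neg hts]
      ring
  have hdot1 : ∀ t, mu t ≠ 0 → star (u t) ⬝ᵥ u t = 1 := by
    intro t h0
    simp only [hu, if_neg h0, star_smul, smul_dotProduct, dotProduct_smul,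
      smul_eq_mul, RCLike.star_def]
    rw [hZw t t, if_pos rfl, ← Complex.ofReal_inv, Complex.conj_ofReal, mul_one]
    rw [← Complex.ofReal_mul, ← Complex.ofReal_mul, ← Complex.ofReal_one]
    congr 1
    have hpos : 0 < mu t := lt_of_le_of_ne (hmunn t) (Ne.symm h0)
    have hsne : Real.sqrt (mu t) ≠ 0 := by positivity
    field_simp
    exact (Real.sq_sqrt hpos.le).symm
  have hnorm : ∀ t, star (u t) ⬝ᵥ u t = 0 ∨ star (u t) ⬝ᵥ u t = 1 := by
    intro t
    rcases eq_or_ne (mu t) 0 with h0 | h0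
    · left; simp [hu, h0]
    · right; exact hdot1 t h0
  have heig : ∀ t, (Zᴴ * Z) *ᵥ u t = ((mu t : ℂ)) • u t := by
    intro t
    rcases eq_or_ne (mu t) 0 with h0 | h0
    · simp [hu, h0]
    · simp only [hu, if_neg h0, Matrix.mulVec_smul]
      rw [Matrix.mulVec_mulVec, Matrix.mul_assoc, ← Matrix.mulVec_mulVec, hMw t,
        Matrix.mulVec_smul]
      rw [smul_comm]
  have hsqrtu : ∀ t, h2.sqrt *ᵥ u t = ((Real.sqrt (mu t) : ℂ)) • u t :=
    fun t => sqrt_mulVec_eigen h2 (heig t)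
  have hquad : ∀ t, (star (u t) ⬝ᵥ (h2.sqrt *ᵥ u t)).re = Real.sqrt (mu t) := by
    intro t
    rw [hsqrtu t, dotProduct_smul, smul_eq_mul]
    rcases eq_or_ne (mu t) 0 with h0 | h0
    · simp [hu, h0]
    · rw [hdot1 t h0, mul_one, Complex.ofReal_re]
  have hfin := sum_quadform_le_trace h2.posSemidef_sqrt u huu hnorm
  have hl : ∑ t, (star (u t) ⬝ᵥ (h2.sqrt *ᵥ u t)).re = ∑ t, Real.sqrt (mu t) :=
    Finset.sum_congr rfl fun t _ => hquad t
  rw [hl] at hfin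
  have hre : ((∑ t, ((Real.sqrt (mu t) : ℂ))).re) = ∑ t, Real.sqrt (mu t) := by simp
  rw [hre]
  exact hfin

lemma traceNorm_eq {p r : ℕ} (Z : Matrix (Fin p) (Fin r) ℂ) :
    (msqrt (Zᴴ * Z)).trace.re = (msqrt (Z * Zᴴ)).trace.re := by
  refine le_antisymm ?_ (traceNorm_le Z)
  have h := traceNorm_le Zᴴ
  rwa [Matrix.conjTranspose_conjTranspose] at h

lemma msqrt_trace_re_nonneg {n : ℕ} (W : Matrix (Fin n) (Fin n) ℂ) :
    0 ≤ (msqrt W).trace.re := by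
  rw [msqrt]
  split_ifs with h
  · exact psd_trace_re_nonneg h.posSemidef_sqrt
  · simp

theorem stmt_19 {N m : ℕ} (n : Fin (m + 1) → ℕ)
    (ψ : (i : Fin (m + 1)) → Fin (n i) → (Fin N → ℂ))
    (ρtil : Fin (m + 1) → Matrix (Fin N) (Fin N) ℂ)
    (hρtil : ∀ i, ρtil i = ∑ k, Matrix.vecMulVec (ψ i k) (star (ψ i k)))
    (X Γ : Matrix ((i : Fin (m + 1)) × Fin (n i)) ((i : Fin (m + 1)) × Fin (n i)) ℂ)
    (hX : ∀ p q, X p q = star (ψ p.1 p.2) ⬝ᵥ ψ q.1 q.2)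
    (hΓblock : ∀ p q, p.1 ≠ q.1 → Γ p q = 0)
    (hΓ : Γ.PosSemidef) (hXΓ : (X - Γ).PosSemidef)
    (q : (i : Fin (m + 1)) → Fin (n i) → ℝ)
    (hq : ∀ i k, q i k = (star (ψ i k) ⬝ᵥ ψ i k).re)
    (γ : (i : Fin (m + 1)) → Fin (n i) → ℝ)
    (hγ : ∀ i k, γ i k = (Γ ⟨i, k⟩ ⟨i, k⟩).re) :
    -- general fact: for a PSD block matrix, the trace norm of the off-diagonal
    -- block is bounded by √(Tr A · Tr C)
    (∀ (p r : ℕ) (A : Matrix (Fin p) (Fin p) ℂ) (B : Matrix (Fin p) (Fin r) ℂ)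
        (C : Matrix (Fin r) (Fin r) ℂ),
      (Matrix.fromBlocks A B Bᴴ C).PosSemidef →
      ∀ a c : ℝ, A.trace.re ≤ a → C.trace.re ≤ c →
        (msqrt (Bᴴ * B)).trace.re ≤ Real.sqrt (a * c)) ∧
    -- in particular, the weighted residuals dominate the squared fidelity
    (∀ i j : Fin (m + 1), i ≠ j →
      (∑ k, (q i k - γ i k)) * (∑ l, (q j l - γ j l)) ≥
        (fidelity (ρtil i) (ρtil j)) ^ 2) := by
  constructor
  · exact fun p r A B C h a c ha hc => part1 A B C h a c ha hc
  intro i j hij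
  set Pi' : Matrix (Fin N) (Fin (n i)) ℂ := Matrix.of (fun x k => ψ i k x) with hPi
  set Pj : Matrix (Fin N) (Fin (n j)) ℂ := Matrix.of (fun x l => ψ j l x) with hPj
  have hρi : ρtil i = Pi' * Pi'ᴴ := by
    rw [hρtil]
    ext x y
    simp [Matrix.sum_apply, Matrix.vecMulVec_apply, Matrix.mul_apply,
      Matrix.conjTranspose_apply, hPi]
  have hρj : ρtil j = Pj * Pjᴴ := by
    rw [hρtil]
    ext x y
    simp [Matrix.sum_apply, Matrix.vecMulVec_apply, Matrix.mul_apply,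
      Matrix.conjTranspose_apply, hPj]
  have hσ : (ρtil j).PosSemidef := by
    rw [hρj]; exact Matrix.posSemidef_self_mul_conjTranspose Pj
  have hmsσ : msqrt (ρtil j) = hσ.sqrt := by rw [msqrt, dif_pos hσ]
  set R : Matrix (Fin N) (Fin N) ℂ := hσ.sqrt with hR
  have hRH : Rᴴ = R := hσ.posSemidef_sqrt.1
  have hRR : R * R = ρtil j := hσ.sqrt_mul_self
  set Y : Matrix (Fin N) (Fin (n i)) ℂ := R * Pi' with hY
  have hYY : msqrt (ρtil j) * ρtil i * msqrt (ρtil j) = Y * Yᴴ := by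
    rw [hmsσ, hρi, hY, Matrix.conjTranspose_mul, hRH]
    simp only [Matrix.mul_assoc]
  set Bm : Matrix (Fin (n i)) (Fin (n j)) ℂ := Pi'ᴴ * Pj with hBm
  have hYHY : Yᴴ * Y = Bm * Bmᴴ := by
    rw [hY, Matrix.conjTranspose_mul, hRH, hBm, Matrix.conjTranspose_mul,
      Matrix.conjTranspose_conjTranspose]
    calc Pi'ᴴ * R * (R * Pi') = Pi'ᴴ * (R * R) * Pi' := by simp only [Matrix.mul_assoc]
      _ = Pi'ᴴ * (Pj * Pjᴴ) * Pi' := by rw [hRR, hρj]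
      _ = Pi'ᴴ * Pj * (Pjᴴ * Pi') := by simp only [Matrix.mul_assoc]
  have hfidel : fidelity (ρtil i) (ρtil j) = (msqrt (Bmᴴ * Bm)).trace.re := by
    rw [fidelity, hYY, ← traceNorm_eq Y, hYHY]
    have h2 := traceNorm_eq Bmᴴ
    rwa [Matrix.conjTranspose_conjTranspose] at h2
  set Am : Matrix (Fin (n i)) (Fin (n i)) ℂ :=
    Matrix.of (fun k k' => (X - Γ) ⟨i, k⟩ ⟨i, k'⟩) with hAm
  set Cm : Matrix (Fin (n j)) (Fin (n j)) ℂ :=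
    Matrix.of (fun l l' => (X - Γ) ⟨j, l⟩ ⟨j, l'⟩) with hCm
  set e : Fin (n i) ⊕ Fin (n j) → ((t : Fin (m + 1)) × Fin (n t)) :=
    Sum.elim (fun k => ⟨i, k⟩) (fun l => ⟨j, l⟩) with he
  have hblock : (X - Γ).submatrix e e = Matrix.fromBlocks Am Bm Bmᴴ Cm := by
    ext s t
    rcases s with k | l <;> rcases t with k' | l'
    · rfl
    · show (X - Γ) ⟨i, k⟩ ⟨j, l'⟩ = Bm k l'
      rw [Matrix.sub_apply, hΓblock ⟨i, k⟩ ⟨j, l'⟩ hij, hX, sub_zero]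
      simp [hBm, hPi, hPj, Matrix.mul_apply, Matrix.conjTranspose_apply, dotProduct]
    · show (X - Γ) ⟨j, l⟩ ⟨i, k'⟩ = Bmᴴ l k'
      rw [Matrix.sub_apply, hΓblock ⟨j, l⟩ ⟨i, k'⟩ (Ne.symm hij), hX, sub_zero]
      simp [hBm, hPi, hPj, Matrix.mul_apply, Matrix.conjTranspose_apply, dotProduct,
        map_sum, mul_comm]
    · rfl
  have hpsd : (Matrix.fromBlocks Am Bm Bmᴴ Cm).PosSemidef := hblock ▸ hXΓ.submatrix e
  have hTrA : Am.trace.re = ∑ k, (q i k - γ i k) := by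
    rw [Matrix.trace, Complex.re_sum]
    refine Finset.sum_congr rfl fun k _ => ?_
    show ((X - Γ) ⟨i, k⟩ ⟨i, k⟩).re = q i k - γ i k
    rw [Matrix.sub_apply, Complex.sub_re, hX, hq, hγ]
  have hTrC : Cm.trace.re = ∑ l, (q j l - γ j l) := by
    rw [Matrix.trace, Complex.re_sum]
    refine Finset.sum_congr rfl fun l _ => ?_
    show ((X - Γ) ⟨j, l⟩ ⟨j, l⟩).re = q j l - γ j l
    rw [Matrix.sub_apply, Complex.sub_re, hX, hq, hγ]
  have hfidle : fidelity (ρtil i) (ρtil j)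
      ≤ Real.sqrt ((∑ k, (q i k - γ i k)) * (∑ l, (q j l - γ j l))) := by
    rw [hfidel]
    exact part1 Am Bm Cm hpsd _ _ (le_of_eq hTrA) (le_of_eq hTrC)
  have hApsd : Am.PosSemidef := hXΓ.submatrix fun k => (⟨i, k⟩ : (t : Fin (m + 1)) × Fin (n t))
  have hCpsd : Cm.PosSemidef := hXΓ.submatrix fun l => (⟨j, l⟩ : (t : Fin (m + 1)) × Fin (n t))
  have ha0 : 0 ≤ ∑ k, (q i k - γ i k) := hTrA ▸ psd_trace_re_nonneg hApsd
  have hc0 : 0 ≤ ∑ l, (q j l - γ j l) := hTrC ▸ psd_trace_re_nonneg hCpsd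
  have hfid0 : 0 ≤ fidelity (ρtil i) (ρtil j) := msqrt_trace_re_nonneg _
  have := pow_le_pow_left₀ hfid0 hfidle 2
  rw [Real.sq_sqrt (mul_nonneg ha0 hc0)] at this
  exact this
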